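/- The Hemlock algorithm provides mutual exclusion: in every execution of the Hemlock transition-system model, for every lock L and every reachable state, at most one thread is in the critical section protected by L. -/
import Mathlib


namespace Hemlock

/-- Program counter locations of a thread in the Hemlock algorithm. -/
inductive PC where
  | remainder  -- in the remainder section
  | entrySpin  -- in the entry code, spinning on the predecessor's Grant field
  | crit       -- in the critical section
  | exitCAS    -- in the exit code, about to perform the CAS on Tail
  | exitDoor   -- in the exit code, about to perform the exit doorstep (write Grant self := some L)
  | exitSpin   -- in the exit code, spinning on its own Grant field
deriving DecidableEq

/-- A global state of the Hemlock transition system. -/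
structure St (Thread Lock : Type) where
  Tail : Lock → Option Thread        -- the Tail field of each lock
  Grant : Thread → Option Lock       -- the Grant field of each thread
  pc : Thread → PC                   -- program counter of each thread
  lk : Thread → Option Lock          -- the lock currently being acquired/released by each thread
  pred : Thread → Option Thread      -- value returned by each thread's last SWAP

variable {Thread Lock : Type} [DecidableEq Thread] [DecidableEq Lock]

/-- The initial state: all Tail and Grant fields are none, all threads in the remainder. -/
def initSt : St Thread Lock :=
  ⟨fun _ => none, fun _ => none, fun _ => .remainder, fun _ => none, fun _ => none⟩

/-- One atomic transition of thread `t`. -/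
inductive Step (t : Thread) : St Thread Lock → St Thread Lock → Prop where
  /-- a step inside the remainder section -/
  | remainderStay (s : St Thread Lock) (h : s.pc t = .remainder) :
      Step t s s
  /-- the entry doorstep for lock `L`: atomic SWAP on `Tail L`, storing the old value in `pred`;
      if the SWAP returned `none` the thread enters the critical section, else it spins -/
  | doorstep (s : St Thread Lock) (L : Lock) (h : s.pc t = .remainder) :
      Step t s ⟨Function.update s.Tail L (some t), s.Grant,
        Function.update s.pc t (if s.Tail L = none then .crit else .entrySpin),
        Function.update s.lk t (some L),
        Function.update s.pred t (s.Tail L)⟩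
  /-- entry-code busy-wait loop: read `Grant p`; it is not yet `some L`, keep spinning -/
  | spinWait (s : St Thread Lock) (p : Thread) (L : Lock)
      (h : s.pc t = .entrySpin) (hp : s.pred t = some p) (hl : s.lk t = some L)
      (hg : s.Grant p ≠ some L) :
      Step t s s
  /-- entry-code busy-wait loop: read `Grant p = some L`; write `Grant p := none`
      and enter the critical section -/
  | spinAcquire (s : St Thread Lock) (p : Thread) (L : Lock)
      (h : s.pc t = .entrySpin) (hp : s.pred t = some p) (hl : s.lk t = some L)
      (hg : s.Grant p = some L) :
      Step t s ⟨s.Tail, Function.update s.Grant p none,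
        Function.update s.pc t .crit, s.lk, s.pred⟩
  /-- a step inside the critical section -/
  | critStay (s : St Thread Lock) (h : s.pc t = .crit) :
      Step t s s
  /-- leave the critical section and begin the exit code -/
  | exitStart (s : St Thread Lock) (h : s.pc t = .crit) :
      Step t s ⟨s.Tail, s.Grant, Function.update s.pc t .exitCAS, s.lk, s.pred⟩
  /-- successful CAS: `Tail L = some self`, so set `Tail L := none` and
      complete the exit code, returning to the remainder section -/
  | casSucc (s : St Thread Lock) (L : Lock)
      (h : s.pc t = .exitCAS) (hl : s.lk t = some L) (ht : s.Tail L = some t) :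
      Step t s ⟨Function.update s.Tail L none, s.Grant,
        Function.update s.pc t .remainder, Function.update s.lk t none, s.pred⟩
  /-- failed CAS: `Tail L ≠ some self`; proceed to the exit doorstep -/
  | casFail (s : St Thread Lock) (L : Lock)
      (h : s.pc t = .exitCAS) (hl : s.lk t = some L) (ht : s.Tail L ≠ some t) :
      Step t s ⟨s.Tail, s.Grant, Function.update s.pc t .exitDoor, s.lk, s.pred⟩
  /-- the exit doorstep: write `Grant self := some L` and start spinning on `Grant self` -/
  | exitDoorstep (s : St Thread Lock) (L : Lock)
      (h : s.pc t = .exitDoor) (hl : s.lk t = some L) :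
      Step t s ⟨s.Tail, Function.update s.Grant t (some L),
        Function.update s.pc t .exitSpin, s.lk, s.pred⟩
  /-- exit-code busy-wait loop: read `Grant self`; it is not yet `none`, keep spinning -/
  | exitSpinWait (s : St Thread Lock) (h : s.pc t = .exitSpin) (hg : s.Grant t ≠ none) :
      Step t s s
  /-- exit-code busy-wait loop: read `Grant self = none`; complete the exit code,
      returning to the remainder section -/
  | exitDone (s : St Thread Lock) (h : s.pc t = .exitSpin) (hg : s.Grant t = none) :
      Step t s ⟨s.Tail, s.Grant, Function.update s.pc t .remainder,
        Function.update s.lk t none, s.pred⟩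

/-- An execution of the Hemlock transition system: an infinite sequence of states starting
    from the initial state, where each step is one transition of the scheduled thread;
    every thread whose program counter is in the entry, exit or critical section eventually
    takes another step, and every thread leaves each critical section after finitely
    many steps. -/
structure Execution (Thread Lock : Type) [DecidableEq Thread] [DecidableEq Lock]
    [Fintype Thread] where
  states : ℕ → St Thread Lock
  sched : ℕ → Thread
  init : states 0 = initSt
  steps : ∀ n, Step (sched n) (states n) (states (n + 1))
  fair : ∀ n t, (states n).pc t ≠ PC.remainder → ∃ m, n ≤ m ∧ sched m = t
  critFinite : ∀ n t, (states n).pc t = PC.crit → ∃ m, n ≤ m ∧ (states m).pc t ≠ PC.crit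

variable [Fintype Thread]

/-- Thread `t` executes the entry doorstep (the SWAP) for lock `L` at time `n`. -/
def doorstepAt (E : Execution Thread Lock) (n : ℕ) (t : Thread) (L : Lock) : Prop :=
  E.sched n = t ∧ (E.states n).pc t = PC.remainder ∧
    (E.states (n + 1)).pc t ≠ PC.remainder ∧ (E.states (n + 1)).lk t = some L

/-- Thread `t` performs the CAS step of the exit code for lock `L` at time `n`
    (successful or not). -/
def casAt (E : Execution Thread Lock) (n : ℕ) (t : Thread) (L : Lock) : Prop :=
  E.sched n = t ∧ (E.states n).pc t = PC.exitCAS ∧ (E.states n).lk t = some L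

/-- Thread `t` performs the exit doorstep (the write `Grant t := some L`) at time `n`. -/
def exitDoorAt (E : Execution Thread Lock) (n : ℕ) (t : Thread) (L : Lock) : Prop :=
  E.sched n = t ∧ (E.states n).pc t = PC.exitDoor ∧ (E.states n).lk t = some L

/-- Thread `t` is in the critical section protected by `L` in state `s`. -/
def inCS (s : St Thread Lock) (t : Thread) (L : Lock) : Prop :=
  s.pc t = PC.crit ∧ s.lk t = some L

/-- Thread `t` is in the entry code for lock `L` in state `s`. -/
def inEntry (s : St Thread Lock) (t : Thread) (L : Lock) : Prop :=
  s.pc t = PC.entrySpin ∧ s.lk t = some L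

/-- Thread `t` enters the critical section protected by `L` at step `m`. -/
def entersCSAt (E : Execution Thread Lock) (m : ℕ) (t : Thread) (L : Lock) : Prop :=
  E.sched m = t ∧ (E.states m).pc t ≠ PC.crit ∧
    (E.states (m + 1)).pc t = PC.crit ∧ (E.states (m + 1)).lk t = some L

/-- Thread `t` completes its critical section protected by `L` at step `k`
    (leaving the critical section and beginning the exit code). -/
def exitsCSAt (E : Execution Thread Lock) (k : ℕ) (t : Thread) (L : Lock) : Prop :=
  E.sched k = t ∧ (E.states k).pc t = PC.crit ∧ (E.states k).lk t = some L ∧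
    (E.states (k + 1)).pc t ≠ PC.crit

/-- Thread `t` completes the exit code for lock `L` at step `k`
    (returning to the remainder section). -/
def completesExitAt (E : Execution Thread Lock) (k : ℕ) (t : Thread) (L : Lock) : Prop :=
  E.sched k = t ∧ (E.states k).lk t = some L ∧
    (E.states k).pc t ≠ PC.remainder ∧ (E.states (k + 1)).pc t = PC.remainder

/-- `m` is the first time at or after `n` at which thread `t` enters the
    critical section protected by `L`. -/
def firstEntryAfter (E : Execution Thread Lock) (n m : ℕ) (t : Thread) (L : Lock) : Prop :=
  n ≤ m ∧ entersCSAt E m t L ∧ ∀ k, n ≤ k → k < m → ¬ entersCSAt E k t L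

/-- At time `n`, thread `T` is spinning in the entry code waiting for `Grant w`
    to become `some L`: its next step reads `Grant w` inside the entry-code
    busy-wait loop with current lock `L` and `pred = some w`. -/
def spinningEntryFor (E : Execution Thread Lock) (n : ℕ) (T w : Thread) (L : Lock) : Prop :=
  (E.states n).pc T = PC.entrySpin ∧ (E.states n).pred T = some w ∧
    (E.states n).lk T = some L

/-- At time `n`, thread `T` is spinning on the word `Grant w`: its next step reads
    `Grant w` inside one of the two busy-wait loops (the entry-code loop with
    `pred = some w`, or the exit-code loop executed by `w` itself). -/
def spinningOn (E : Execution Thread Lock) (n : ℕ) (T w : Thread) : Prop :=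
  ((E.states n).pc T = PC.entrySpin ∧ (E.states n).pred T = some w) ∨
    (T = w ∧ (E.states n).pc T = PC.exitSpin)

/-- Lock `L` is associated with thread `T` at time `n`: `T` has executed the entry
    doorstep for `L` and has not yet completed the exit code for `L`. -/
def associated (E : Execution Thread Lock) (n : ℕ) (T : Thread) (L : Lock) : Prop :=
  ∃ m, m < n ∧ doorstepAt E m T L ∧ ∀ k, m < k → k < n → ¬ completesExitAt E k T L

/-- Thread `u` "owns" lock `L` in state `s`. -/
def Owns (s : St Thread Lock) (L : Lock) (u : Thread) : Prop :=
  (s.pc u = PC.crit ∨ s.pc u = PC.exitCAS ∨ s.pc u = PC.exitDoor) ∧ s.lk u = some L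

/-- The mutual-exclusion invariant. -/
structure Inv (s : St Thread Lock) : Prop where
  uniq : ∀ L u v, Owns s L u → Owns s L v → u = v
  og : ∀ L u p, Owns s L u → s.Grant p ≠ some L
  gg : ∀ L p q, s.Grant p = some L → s.Grant q = some L → p = q
  tl : ∀ L, ((∃ u, Owns s L u) ∨ (∃ p, s.Grant p = some L)) → s.Tail L ≠ none

lemma inv_init : Inv (initSt : St Thread Lock) := by
  refine ⟨?_, ?_, ?_, ?_⟩ <;> simp [Owns, initSt]

lemma inv_of_mono {s s' : St Thread Lock} (hI : Inv s)
    (hO : ∀ L u, Owns s' L u → Owns s L u)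
    (hG : s'.Grant = s.Grant) (hT : s'.Tail = s.Tail) : Inv s' := by
  refine ⟨?_, ?_, ?_, ?_⟩
  · intro L u v hu hv; exact hI.uniq L u v (hO L u hu) (hO L v hv)
  · intro L u p hu; rw [hG]; exact hI.og L u p (hO L u hu)
  · intro L p q hp hq; rw [hG] at hp hq; exact hI.gg L p q hp hq
  · intro L hex; rw [hT]; refine hI.tl L ?_
    rcases hex with ⟨u, hu⟩ | ⟨p, hp⟩
    · exact Or.inl ⟨u, hO L u hu⟩
    · rw [hG] at hp; exact Or.inr ⟨p, hp⟩

lemma step_inv {t : Thread} {s s' : St Thread Lock} (hst : Step t s s') (hI : Inv s) :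
    Inv s' := by
  cases hst with
  | remainderStay h => exact hI
  | spinWait p L h hp hl hg => exact hI
  | critStay h => exact hI
  | exitSpinWait h hg => exact hI
  | exitStart h =>
      refine inv_of_mono hI ?_ rfl rfl
      intro L' u hu
      obtain ⟨h1, h2⟩ := hu
      by_cases hut : u = t
      · subst hut
        exact ⟨Or.inl h, h2⟩
      · simp only [Function.update_apply, hut, if_false] at h1
        exact ⟨h1, h2⟩
  | casFail L h hl ht =>
      refine inv_of_mono hI ?_ rfl rfl
      intro L' u hu
      obtain ⟨h1, h2⟩ := hu
      by_cases hut : u = t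
      · subst hut
        exact ⟨Or.inr (Or.inl h), h2⟩
      · simp only [Function.update_apply, hut, if_false] at h1
        exact ⟨h1, h2⟩
  | exitDone h hg =>
      refine inv_of_mono hI ?_ rfl rfl
      intro L' u hu
      obtain ⟨h1, h2⟩ := hu
      by_cases hut : u = t
      · subst hut
        simp only [Function.update_self] at h1
        rcases h1 with h1 | h1 | h1 <;> exact absurd h1 (by simp)
      · simp only [Function.update_apply, hut, if_false] at h1 h2
        exact ⟨h1, h2⟩
  | doorstep L h =>
      have hO : ∀ (L' : Lock) (u : Thread),
          Owns (⟨Function.update s.Tail L (some t), s.Grant,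
            Function.update s.pc t (if s.Tail L = none then PC.crit else PC.entrySpin),
            Function.update s.lk t (some L),
            Function.update s.pred t (s.Tail L)⟩ : St Thread Lock) L' u →
          (u = t ∧ L' = L ∧ s.Tail L = none) ∨ (u ≠ t ∧ Owns s L' u) := by
        intro L' u hu
        obtain ⟨h1, h2⟩ := hu
        by_cases hut : u = t
        · subst hut
          left
          simp only [Function.update_self] at h1 h2
          by_cases hT : s.Tail L = none
          · simp only [hT, if_true] at h1
            exact ⟨rfl, by injection h2.symm, hT⟩
          · simp only [hT, if_false] at h1
            rcases h1 with h1 | h1 | h1 <;> exact absurd h1 (by simp)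
        · right
          simp only [Function.update_apply, hut, if_false] at h1 h2
          exact ⟨hut, h1, h2⟩
      refine ⟨?_, ?_, ?_, ?_⟩
      · intro L' u v hu hv
        rcases hO L' u hu with ⟨hu1, rfl, hu3⟩ | ⟨hu1, hu2⟩
        · rcases hO _ v hv with ⟨hv1, -, -⟩ | ⟨hv1, hv2⟩
          · rw [hu1, hv1]
          · exact absurd hu3 (hI.tl _ (Or.inl ⟨v, hv2⟩))
        · rcases hO L' v hv with ⟨hv1, rfl, hv3⟩ | ⟨hv1, hv2⟩
          · exact absurd hv3 (hI.tl _ (Or.inl ⟨u, hu2⟩))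
          · exact hI.uniq L' u v hu2 hv2
      · intro L' u p hu hgp
        rcases hO L' u hu with ⟨-, rfl, hu3⟩ | ⟨-, hu2⟩
        · exact hI.tl L' (Or.inr ⟨p, hgp⟩) hu3
        · exact hI.og L' u p hu2 hgp
      · intro L' p q hp hq
        exact hI.gg L' p q hp hq
      · intro L' hex
        show Function.update s.Tail L (some t) L' ≠ none
        by_cases hL : L' = L
        · subst hL; simp
        · rw [Function.update_of_ne hL]
          refine hI.tl L' ?_
          rcases hex with ⟨u, hu⟩ | ⟨p, hp⟩
          · rcases hO L' u hu with ⟨-, rfl, -⟩ | ⟨-, hu2⟩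
            · exact absurd rfl hL
            · exact Or.inl ⟨u, hu2⟩
          · exact Or.inr ⟨p, hp⟩
  | spinAcquire p L h hp hl hg =>
      have noOwnL : ∀ u, ¬ Owns s L u := fun u hu => hI.og L u p hu hg
      have hO : ∀ (L' : Lock) (u : Thread),
          Owns (⟨s.Tail, Function.update s.Grant p none,
            Function.update s.pc t PC.crit, s.lk, s.pred⟩ : St Thread Lock) L' u →
          (u = t ∧ L' = L) ∨ (u ≠ t ∧ Owns s L' u) := by
        intro L' u hu
        obtain ⟨h1, h2⟩ := hu
        by_cases hut : u = t
        · subst hut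
          left
          refine ⟨rfl, ?_⟩
          have h2' : s.lk u = some L' := h2
          rw [hl] at h2'
          exact (Option.some.inj h2').symm
        · right
          simp only [Function.update_apply, hut, if_false] at h1
          exact ⟨hut, h1, h2⟩
      have hG : ∀ (L'' : Lock) (q : Thread),
          Function.update s.Grant p none q = some L'' → q ≠ p ∧ s.Grant q = some L'' := by
        intro L'' q hq
        by_cases hqp : q = p
        · subst hqp; simp at hq
        · rw [Function.update_of_ne hqp] at hq; exact ⟨hqp, hq⟩
      refine ⟨?_, ?_, ?_, ?_⟩
      · intro L' u v hu hv
        rcases hO L' u hu with ⟨rfl, rfl⟩ | ⟨hu1, hu2⟩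
        · rcases hO _ v hv with ⟨rfl, -⟩ | ⟨hv1, hv2⟩
          · rfl
          · exact absurd hv2 (noOwnL v)
        · rcases hO L' v hv with ⟨rfl, rfl⟩ | ⟨hv1, hv2⟩
          · exact absurd hu2 (noOwnL u)
          · exact hI.uniq L' u v hu2 hv2
      · intro L' u q hu hgq
        obtain ⟨hqp, hgq'⟩ := hG L' q hgq
        rcases hO L' u hu with ⟨rfl, rfl⟩ | ⟨-, hu2⟩
        · exact hqp (hI.gg _ q p hgq' hg)
        · exact hI.og L' u q hu2 hgq'
      · intro L' q r hq hr
        exact hI.gg L' q r (hG L' q hq).2 (hG L' r hr).2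
      · intro L' hex
        show s.Tail L' ≠ none
        refine hI.tl L' ?_
        rcases hex with ⟨u, hu⟩ | ⟨q, hq⟩
        · rcases hO L' u hu with ⟨rfl, rfl⟩ | ⟨-, hu2⟩
          · exact Or.inr ⟨p, hg⟩
          · exact Or.inl ⟨u, hu2⟩
        · exact Or.inr ⟨q, (hG L' q hq).2⟩
  | casSucc L h hl ht =>
      have hOwnT : Owns s L t := ⟨Or.inr (Or.inl h), hl⟩
      have hO : ∀ (L' : Lock) (u : Thread),
          Owns (⟨Function.update s.Tail L none, s.Grant,
            Function.update s.pc t PC.remainder, Function.update s.lk t none,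
            s.pred⟩ : St Thread Lock) L' u →
          u ≠ t ∧ Owns s L' u := by
        intro L' u hu
        obtain ⟨h1, h2⟩ := hu
        by_cases hut : u = t
        · subst hut
          simp only [Function.update_self] at h1
          rcases h1 with h1 | h1 | h1 <;> exact absurd h1 (by simp)
        · simp only [Function.update_apply, hut, if_false] at h1 h2
          exact ⟨hut, h1, h2⟩
      refine ⟨?_, ?_, ?_, ?_⟩
      · intro L' u v hu hv
        exact hI.uniq L' u v (hO L' u hu).2 (hO L' v hv).2
      · intro L' u q hu hgq
        exact hI.og L' u q (hO L' u hu).2 hgq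
      · intro L' q r hq hr
        exact hI.gg L' q r hq hr
      · intro L' hex
        show Function.update s.Tail L none L' ≠ none
        by_cases hL : L' = L
        · subst hL
          exfalso
          rcases hex with ⟨u, hu⟩ | ⟨q, hq⟩
          · obtain ⟨hut, hu2⟩ := hO L' u hu
            exact hut (hI.uniq _ u t hu2 hOwnT)
          · exact hI.og _ t q hOwnT hq
        · rw [Function.update_of_ne hL]
          refine hI.tl L' ?_
          rcases hex with ⟨u, hu⟩ | ⟨q, hq⟩
          · exact Or.inl ⟨u, (hO L' u hu).2⟩
          · exact Or.inr ⟨q, hq⟩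
  | exitDoorstep L h hl =>
      have hOwnT : Owns s L t := ⟨Or.inr (Or.inr h), hl⟩
      have hO : ∀ (L' : Lock) (u : Thread),
          Owns (⟨s.Tail, Function.update s.Grant t (some L),
            Function.update s.pc t PC.exitSpin, s.lk, s.pred⟩ : St Thread Lock) L' u →
          u ≠ t ∧ Owns s L' u := by
        intro L' u hu
        obtain ⟨h1, h2⟩ := hu
        by_cases hut : u = t
        · subst hut
          simp only [Function.update_self] at h1
          rcases h1 with h1 | h1 | h1 <;> exact absurd h1 (by simp)
        · simp only [Function.update_apply, hut, if_false] at h1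
          exact ⟨hut, h1, h2⟩
      have hG : ∀ (L'' : Lock) (q : Thread),
          Function.update s.Grant t (some L) q = some L'' →
          (q = t ∧ L'' = L) ∨ (q ≠ t ∧ s.Grant q = some L'') := by
        intro L'' q hq
        by_cases hqt : q = t
        · subst hqt
          rw [Function.update_self] at hq
          exact Or.inl ⟨rfl, (Option.some.injEq _ _ ▸ hq : L = L'').symm⟩
        · rw [Function.update_of_ne hqt] at hq
          exact Or.inr ⟨hqt, hq⟩
      refine ⟨?_, ?_, ?_, ?_⟩
      · intro L' u v hu hv
        exact hI.uniq L' u v (hO L' u hu).2 (hO L' v hv).2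
      · intro L' u q hu hgq
        obtain ⟨hut, hu2⟩ := hO L' u hu
        rcases hG L' q hgq with ⟨rfl, rfl⟩ | ⟨-, hq2⟩
        · exact hut (hI.uniq _ u q hu2 hOwnT)
        · exact hI.og L' u q hu2 hq2
      · intro L' q r hq hr
        rcases hG L' q hq with ⟨rfl, rfl⟩ | ⟨hq1, hq2⟩
        · rcases hG L' r hr with ⟨rfl, -⟩ | ⟨-, hr2⟩
          · rfl
          · exact absurd hr2 (hI.og _ _ r hOwnT)
        · rcases hG L' r hr with ⟨rfl, rfl⟩ | ⟨-, hr2⟩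
          · exact absurd hq2 (hI.og _ _ q hOwnT)
          · exact hI.gg L' q r hq2 hr2
      · intro L' hex
        show s.Tail L' ≠ none
        refine hI.tl L' ?_
        rcases hex with ⟨u, hu⟩ | ⟨q, hq⟩
        · exact Or.inl ⟨u, (hO L' u hu).2⟩
        · rcases hG L' q hq with ⟨rfl, rfl⟩ | ⟨-, hq2⟩
          · exact Or.inl ⟨_, hOwnT⟩
          · exact Or.inr ⟨q, hq2⟩

variable [Fintype Thread]

lemma inv_states (E : Execution Thread Lock) (n : ℕ) : Inv (E.states n) := by
  induction n with
  | zero => rw [E.init]; exact inv_init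
  | succ n ih => exact step_inv (E.steps n) ih

/-- Mutual exclusion: at any reachable state, at most one thread is in the critical
section protected by any given lock `L`. -/
theorem mutual_exclusion {Thread Lock : Type} [DecidableEq Thread] [DecidableEq Lock]
    [Fintype Thread] (E : Execution Thread Lock) (L : Lock) (n : ℕ)
    (T1 T2 : Thread) (h1 : inCS (E.states n) T1 L) (h2 : inCS (E.states n) T2 L) :
    T1 = T2 := by
  exact (inv_states E n).uniq L T1 T2 ⟨Or.inl h1.1, h1.2⟩ ⟨Or.inl h2.1, h2.2⟩

end Hemlock
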